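/- Let c ≥ 1, b ∈ ℕ, ε, δ ∈ (0,1), and let f* : ℝ → {−1,1} be the right-continuous piecewise constant function with alternation points a_1 < ... < a_c (f* is constant on (−∞, a_1), on each [a_j, a_{j+1}) and on [a_c, ∞), with consecutive values differing; thus f* has exactly c alternations). Let D be a probability measure on ℝ and suppose there exist pairwise disjoint intervals I_1, ..., I_{2c}, where for each j, I_{2j−1} = [l_j, a_j) and I_{2j} = [a_j, r_j) with a_{j−1} ≤ l_j < a_j < r_j ≤ min(l_{j+1}, a_{j+1}), and D(I_j) = ε/(2c) for every j. If X_1, ..., X_m are i.i.d. with law D and m ≥ 2c(2(b+1) + 8·ln(2c/δ))/ε, then with probability at least 1−δ, the set of points x ∈ ℝ on which every h : ℝ → {−1,1} with at most c alternations and at most b mistakes on the labeled sample {(X_i, f*(X_i))} satisfies h(x) = f*(x), has D-measure at least 1−ε. -/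

import Mathlib

open MeasureTheory

/-- The number of alternations of `f : ℝ → ℤ`: the supremum, over finite increasing
sequences `t 0 < t 1 < ... < t m`, of the number of indices `i` with `f (t i) ≠ f (t (i+1))`. -/
noncomputable def alternations (f : ℝ → ℤ) : ℕ∞ :=
  ⨆ (m : ℕ) (t : Fin (m + 1) → ℝ) (_ : StrictMono t),
    ((Finset.univ.filter fun i : Fin m => f (t i.castSucc) ≠ f (t i.succ)).card : ℕ∞)

/-- The right-continuous `{-1,1}`-valued piecewise constant function with alternation
points `a 0 < a 1 < ... < a (c-1)` and value `s` to the left of all of them. -/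
noncomputable def stepFun {c : ℕ} (a : Fin c → ℝ) (s : ℤ) : ℝ → ℤ :=
  fun x => s * (-1) ^ (Finset.univ.filter fun j => a j ≤ x).card

open Finset
open scoped ENNReal
set_option maxHeartbeats 1000000

section Aux

lemma alt_ge (h : ℝ → ℤ) (n : ℕ) (t : Fin (n+1) → ℝ) (ht : StrictMono t)
    (hd : ∀ i : Fin n, h (t i.castSucc) ≠ h (t i.succ)) : (n : ℕ∞) ≤ alternations h := by
  have hcard : (Finset.univ.filter fun i : Fin n => h (t i.castSucc) ≠ h (t i.succ)).card = n := by
    rw [Finset.filter_true_of_mem (fun i _ => hd i), Finset.card_univ, Fintype.card_fin]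
  refine le_iSup_of_le n (le_iSup_of_le t (le_iSup_of_le ht ?_))
  rw [hcard]


lemma sgn_parity (s : ℤ) {i k : ℕ} (hik : i % 2 = k % 2) : s * (-1) ^ i = s * (-1) ^ k := by
  congr 1
  rw [← Nat.div_add_mod i 2, ← Nat.div_add_mod k 2, hik, pow_add, pow_add, pow_mul, pow_mul]
  norm_num


lemma sgn_ne' {s : ℤ} (hs : s = -1 ∨ s = 1) {i k : ℕ} (hik : i % 2 ≠ k % 2) :
    s * (-1) ^ i ≠ s * (-1) ^ k := by
  rcases Nat.even_or_odd i with he | ho <;> rcases Nat.even_or_odd k with he2 | ho2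
  · exact absurd (by rw [Nat.even_iff.1 he, Nat.even_iff.1 he2]) hik
  · rw [he.neg_one_pow, ho2.neg_one_pow]; rcases hs with rfl | rfl <;> norm_num
  · rw [ho.neg_one_pow, he2.neg_one_pow]; rcases hs with rfl | rfl <;> norm_num
  · exact absurd (by rw [Nat.odd_iff.1 ho, Nat.odd_iff.1 ho2]) hik


-- contradiction lemma: a chain of c+2 points with all adjacent h-values distinct
-- contradicts alternations h ≤ c
lemma alt_contra {c : ℕ} (h : ℝ → ℤ) (halt : alternations h ≤ (c : ℕ∞))
    (t : Fin (c+2) → ℝ) (ht : StrictMono t)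
    (hd : ∀ i : Fin (c+1), h (t i.castSucc) ≠ h (t i.succ)) : False := by
  have := (alt_ge h (c+1) t ht hd).trans halt
  have : (c+1 : ℕ) ≤ c := by exact_mod_cast this
  omega

lemma filter_lt_card {c n : ℕ} (hn : n ≤ c) :
    (Finset.univ.filter fun k : Fin c => (k : ℕ) < n).card = n := by
  have : (Finset.univ.filter fun k : Fin c => (k : ℕ) < n)
      = Finset.univ.map (Fin.castLEEmb hn) := by
    ext k
    simp only [Finset.mem_filter, Finset.mem_univ, true_and, Finset.mem_map,
      Fin.castLEEmb_apply]
    constructor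
    · intro hk; exact ⟨⟨k, hk⟩, by ext; simp⟩
    · rintro ⟨i, rfl⟩; exact i.2
  rw [this, Finset.card_map, Finset.card_univ, Fintype.card_fin]


lemma stepFun_val {c : ℕ} (a : Fin c → ℝ) (s : ℤ) (x : ℝ) (n : ℕ) (hn : n ≤ c)
    (hx : ∀ k : Fin c, a k ≤ x ↔ (k : ℕ) < n) : stepFun a s x = s * (-1) ^ n := by
  unfold stepFun
  congr 2
  rw [show (Finset.univ.filter fun j : Fin c => a j ≤ x)
      = Finset.univ.filter fun k : Fin c => (k : ℕ) < n from Finset.filter_congr fun k _ => by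
        simp [hx k]]
  exact filter_lt_card hn

lemma key {c : ℕ} (hc : 1 ≤ c) (a l r p q : Fin c → ℝ) (ha : StrictMono a)
    (hl : ∀ j, l j < a j) (hr : ∀ j, a j < r j)
    (hsep : ∀ j k : Fin c, j < k → r j ≤ l k)
    (hlp : ∀ j, l j ≤ p j) (hpa : ∀ j, p j < a j)
    (haq : ∀ j, a j ≤ q j) (hqr : ∀ j, q j < r j)
    (s : ℤ) (hs : s = -1 ∨ s = 1) (h : ℝ → ℤ)
    (hhp : ∀ j, h (p j) = s * (-1) ^ (j : ℕ))
    (hhq : ∀ j, h (q j) = s * (-1) ^ ((j : ℕ) + 1))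
    (halt : alternations h ≤ (c : ℕ∞)) (x : ℝ)
    (hx : ∀ j, x < l j ∨ r j ≤ x) : h x = stepFun a s x := by
  by_contra hne
  have hpq : ∀ j, p j < q j := fun j => (hpa j).trans_le (haq j)
  have hqp : ∀ j k : Fin c, j < k → q j < p k := fun j k hjk =>
    ((hqr j).trans_le (hsep j k hjk)).trans_le (hlp k)
  have hpp : ∀ j k : Fin c, j < k → p j < p k := fun j k hjk => (hpq j).trans (hqp j k hjk)
  have hpp' : ∀ (j k : Fin c), (j:ℕ) < (k:ℕ) → p j < p k := fun j k hjk =>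
    hpp j k (by rwa [Fin.lt_def])
  rcases em (∀ k, x < l k) with hA | hB
  · -- x below everything
    rw [stepFun_val a s x 0 (by omega)
      (fun k => iff_of_false (not_le.2 ((hA k).trans (hl k))) (by omega))] at hne
    set t : Fin (c+2) → ℝ := fun i =>
      if h0 : (i:ℕ) = 0 then x
      else if hic : (i:ℕ) ≤ c then p ⟨(i:ℕ)-1, by omega⟩
      else q ⟨c-1, by omega⟩ with ht_def
    have htx : ∀ i : Fin (c+2), (i:ℕ) = 0 → t i = x := by
      intro i h0; simp only [ht_def]; rw [dif_pos h0]
    have htp : ∀ (k : ℕ) (_h1 : 1 ≤ k) (_h2 : k ≤ c) (i : Fin (c+2)) (_h3 : (i:ℕ) = k),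
        t i = p ⟨k-1, by omega⟩ := by
      intro k h1 h2 i hik; subst hik; simp only [ht_def]
      rw [dif_neg (by omega), dif_pos (by omega)]
    have htq : ∀ i : Fin (c+2), c < (i:ℕ) → t i = q ⟨c-1, by omega⟩ := by
      intro i h2; simp only [ht_def]
      rw [dif_neg (by omega), dif_neg (by omega)]
    refine alt_contra h halt t ?_ ?_
    · rw [Fin.strictMono_iff_lt_succ]
      intro i
      have hi := i.isLt
      rcases Nat.eq_zero_or_pos (i:ℕ) with h0 | h1
      · rw [htx _ (by simp [h0]), htp 1 le_rfl hc _ (by simp [h0])]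
        exact (hA _).trans_le (hlp _)
      · rcases Nat.lt_or_ge (i:ℕ) c with h2 | h2
        · rw [htp (i:ℕ) (by omega) (by omega) _ (by simp),
            htp ((i:ℕ)+1) (by omega) (by omega) _ (by simp)]
          exact hpp' _ _ (by show (i:ℕ)-1 < (i:ℕ)+1-1; omega)
        · rw [htp (i:ℕ) (by omega) (by omega) _ (by simp), htq _ (by simp; omega)]
          have he : (⟨(i:ℕ)-1, by omega⟩ : Fin c) = ⟨c-1, by omega⟩ := by
            ext; simp; omega
          rw [he]; exact hpq _
    · intro i
      have hi := i.isLt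
      rcases Nat.eq_zero_or_pos (i:ℕ) with h0 | h1
      · rw [htx _ (by simp [h0]), htp 1 le_rfl hc _ (by simp [h0]), hhp]
        exact fun hcon => hne (hcon.trans (sgn_parity s (i := 1-1) (k := 0) (by omega)))
      · rcases Nat.lt_or_ge (i:ℕ) c with h2 | h2
        · rw [htp (i:ℕ) (by omega) (by omega) _ (by simp),
            htp ((i:ℕ)+1) (by omega) (by omega) _ (by simp), hhp, hhp]
          exact sgn_ne' hs (i := (i:ℕ)-1) (k := (i:ℕ)+1-1) (by omega)
        · rw [htp (i:ℕ) (by omega) (by omega) _ (by simp), htq _ (by simp; omega), hhp, hhq]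
          exact sgn_ne' hs (i := (i:ℕ)-1) (k := (c-1)+1) (by omega)
  · -- there is an interval to the left of x
    push_neg at hB
    obtain ⟨k0, hk0⟩ := hB
    have hJ : (univ.filter fun k : Fin c => r k ≤ x).Nonempty := by
      refine ⟨k0, ?_⟩
      simp only [mem_filter, mem_univ, true_and]
      rcases hx k0 with h' | h'
      · exact absurd hk0 (not_le.2 h')
      · exact h'
    set jf := (univ.filter fun k : Fin c => r k ≤ x).max' hJ with hjf
    have hrx : r jf ≤ x := by
      have := (univ.filter fun k : Fin c => r k ≤ x).max'_mem hJ
      simpa using this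
    have hxl : ∀ k, jf < k → x < l k := by
      intro k hk
      rcases hx k with h' | h'
      · exact h'
      · exact absurd hk (not_lt.2 (Finset.le_max' _ k (by simpa using h')))
    have hjc : (jf:ℕ) < c := jf.isLt
    rw [stepFun_val a s x ((jf:ℕ)+1) (by omega) (fun k => by
      constructor
      · intro hk
        by_contra hklt
        have hj2 : jf < k := by rw [Fin.lt_def]; omega
        exact absurd hk (not_le.2 ((hxl k hj2).trans (hl k)))
      · intro hk
        have hj2 : k ≤ jf := by rw [Fin.le_def]; omega
        exact ((ha.monotone hj2).trans (hr jf).le).trans hrx)] at hne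
    set t : Fin (c+2) → ℝ := fun i =>
      if hij : (i:ℕ) ≤ (jf:ℕ) then p ⟨(i:ℕ), by omega⟩
      else if h1 : (i:ℕ) = (jf:ℕ)+1 then q jf
      else if h2 : (i:ℕ) = (jf:ℕ)+2 then x
      else p ⟨(i:ℕ)-2, by omega⟩ with ht_def
    have htp1 : ∀ (k : ℕ) (_h1 : k ≤ (jf:ℕ)) (i : Fin (c+2)) (_h3 : (i:ℕ) = k),
        t i = p ⟨k, by omega⟩ := by
      intro k hk i hik; subst hik; simp only [ht_def]; rw [dif_pos hk]
    have htq : ∀ i : Fin (c+2), (i:ℕ) = (jf:ℕ)+1 → t i = q jf := by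
      intro i h1; simp only [ht_def]; rw [dif_neg (by omega), dif_pos h1]
    have htx : ∀ i : Fin (c+2), (i:ℕ) = (jf:ℕ)+2 → t i = x := by
      intro i h1; simp only [ht_def]; rw [dif_neg (by omega), dif_neg (by omega), dif_pos h1]
    have htp2 : ∀ (k : ℕ) (_h1 : (jf:ℕ)+2 < k) (_h2 : k < c+2) (i : Fin (c+2)) (_h3 : (i:ℕ) = k),
        t i = p ⟨k-2, by omega⟩ := by
      intro k h1 h2 i hik; subst hik; simp only [ht_def]
      rw [dif_neg (by omega), dif_neg (by omega), dif_neg (by omega)]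
    refine alt_contra h halt t ?_ ?_
    · rw [Fin.strictMono_iff_lt_succ]
      intro i
      have hi := i.isLt
      rcases Nat.lt_or_ge (i:ℕ) (jf:ℕ) with h1 | h1
      · rw [htp1 (i:ℕ) (by omega) _ (by simp), htp1 ((i:ℕ)+1) (by omega) _ (by simp)]
        exact hpp' _ _ (by simp <;> omega)
      rcases Nat.eq_or_lt_of_le h1 with h1' | h1'
      · rw [htp1 (i:ℕ) (by omega) _ (by simp), htq _ (by simp; omega)]
        have he : (⟨(i:ℕ), by omega⟩ : Fin c) = jf := by ext; simp; omega
        rw [he]; exact hpq _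
      rcases Nat.eq_or_lt_of_le h1' with h2 | h2
      · rw [htq _ (by simp; omega), htx _ (by simp; omega)]
        exact (hqr jf).trans_le hrx
      rcases Nat.eq_or_lt_of_le h2 with h3 | h3
      · rw [htx _ (by simp; omega), htp2 ((i:ℕ)+1) (by omega) (by omega) _ (by simp)]
        have hj1c : (jf:ℕ)+1 < c := by omega
        have he : (⟨(i:ℕ)+1-2, by omega⟩ : Fin c) = ⟨(jf:ℕ)+1, hj1c⟩ := by
          ext; simp; omega
        rw [he]
        exact (hxl _ (by simp [Fin.lt_def])).trans_le (hlp _)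
      · rw [htp2 (i:ℕ) (by omega) (by omega) _ (by simp),
          htp2 ((i:ℕ)+1) (by omega) (by omega) _ (by simp)]
        exact hpp' _ _ (by simp <;> omega)
    · intro i
      have hi := i.isLt
      rcases Nat.lt_or_ge (i:ℕ) (jf:ℕ) with h1 | h1
      · rw [htp1 (i:ℕ) (by omega) _ (by simp), htp1 ((i:ℕ)+1) (by omega) _ (by simp),
          hhp, hhp]
        exact sgn_ne' hs (i := (i:ℕ)) (k := (i:ℕ)+1) (by omega)
      rcases Nat.eq_or_lt_of_le h1 with h1' | h1'
      · rw [htp1 (i:ℕ) (by omega) _ (by simp), htq _ (by simp; omega), hhp, hhq]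
        exact sgn_ne' hs (i := (i:ℕ)) (k := (jf:ℕ)+1) (by omega)
      rcases Nat.eq_or_lt_of_le h1' with h2 | h2
      · rw [htq _ (by simp; omega), htx _ (by simp; omega), hhq]
        exact fun hcon => hne (hcon.symm.trans (sgn_parity s (i := (jf:ℕ)+1) (k := (jf:ℕ)+1) rfl))
      rcases Nat.eq_or_lt_of_le h2 with h3 | h3
      · rw [htx _ (by simp; omega), htp2 ((i:ℕ)+1) (by omega) (by omega) _ (by simp), hhp]
        exact fun hcon => hne (hcon.trans (sgn_parity s (i := (i:ℕ)+1-2) (k := (jf:ℕ)+1) (by omega)))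
      · rw [htp2 (i:ℕ) (by omega) (by omega) _ (by simp),
          htp2 ((i:ℕ)+1) (by omega) (by omega) _ (by simp), hhp, hhp]
        exact sgn_ne' hs (i := (i:ℕ)-2) (k := (i:ℕ)+1-2) (by omega)

lemma chernoff_sum (mm b : ℕ) (pp L : ℝ) (hp0 : 0 < pp) (hp1 : pp ≤ 1) (hL : 0 < L)
    (hM : 2*((b:ℝ)+1) + 8*L ≤ mm*pp) :
    ∑ A ∈ Finset.univ.powerset.filter (fun A : Finset (Fin mm) => A.card ≤ b),
      pp^A.card * (1-pp)^(mm - A.card) ≤ Real.exp (-L) := by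
  set M : ℝ := mm * pp with hMdef
  set k : ℝ := (b:ℝ) + 1 with hkdef
  have hk1 : 1 ≤ k := by rw [hkdef]; have : (0:ℝ) ≤ b := Nat.cast_nonneg b; linarith
  have hk0 : 0 < k := by linarith
  have hL' : 0 ≤ L := hL.le
  have hMk : 2*k + 8*L ≤ M := by rw [hkdef]; exact hM
  have hM0 : 0 < M := by nlinarith
  have hMk' : k < M := by nlinarith
  set t : ℝ := Real.log (M/k) with htdef
  have ht0 : 0 ≤ t := Real.log_nonneg (by rw [le_div_iff₀ hk0]; nlinarith)
  have hent : Real.exp (-t) = k / M := by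
    rw [htdef, ← Real.log_inv, Real.exp_log (by positivity)]
    field_simp
  have hq0 : 0 ≤ 1 - pp := by linarith
  have step1 : ∀ A ∈ Finset.univ.powerset.filter (fun A : Finset (Fin mm) => A.card ≤ b),
      pp^A.card * (1-pp)^(mm - A.card) ≤
        Real.exp (t*b) * ((pp * Real.exp (-t))^A.card * (1-pp)^(mm - A.card)) := by
    intro A hA
    simp only [mem_filter, mem_powerset] at hA
    have hcb : (A.card : ℝ) ≤ b := by exact_mod_cast hA.2
    have hxp : Real.exp (-t) ^ A.card = Real.exp (-(t * A.card)) := by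
      rw [← Real.exp_nat_mul]; ring_nf
    have heq : Real.exp (t*b) * ((pp * Real.exp (-t))^A.card * (1-pp)^(mm - A.card))
        = Real.exp (t*b - t*A.card) * (pp^A.card * (1-pp)^(mm - A.card)) := by
      rw [mul_pow, hxp, show t*b - t*(A.card:ℝ) = t*b + -(t*A.card) by ring, Real.exp_add]
      ring
    rw [heq]
    have h1 : (1:ℝ) ≤ Real.exp (t*b - t*A.card) := by
      have := Real.add_one_le_exp (t*b - t*A.card)
      nlinarith
    nlinarith [mul_nonneg (pow_nonneg hp0.le A.card) (pow_nonneg hq0 (mm - A.card))]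
  have step2 : ∑ A ∈ Finset.univ.powerset.filter (fun A : Finset (Fin mm) => A.card ≤ b),
      (pp * Real.exp (-t))^A.card * (1-pp)^(mm - A.card)
      ≤ (pp * Real.exp (-t) + (1-pp))^mm := by
    have hbin : ∑ A ∈ (Finset.univ : Finset (Fin mm)).powerset,
        (pp * Real.exp (-t))^A.card * (1-pp)^(mm - A.card)
        = (pp * Real.exp (-t) + (1-pp))^mm := by
      calc ∑ A ∈ (Finset.univ : Finset (Fin mm)).powerset,
            (pp * Real.exp (-t))^A.card * (1-pp)^(mm - A.card)
          = ∑ A ∈ (Finset.univ : Finset (Fin mm)).powerset,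
            (∏ _i ∈ A, (pp * Real.exp (-t))) * ∏ _i ∈ Finset.univ \ A, (1-pp) := by
            refine Finset.sum_congr rfl fun A hA => ?_
            rw [Finset.prod_const, Finset.prod_const,
              Finset.card_sdiff_of_subset (Finset.subset_univ A), Finset.card_univ, Fintype.card_fin]
        _ = ∏ _i : Fin mm, (pp * Real.exp (-t) + (1-pp)) :=
            (Finset.prod_add _ _ _).symm
        _ = (pp * Real.exp (-t) + (1-pp))^mm := by
            rw [Finset.prod_const, Finset.card_univ, Fintype.card_fin]
    rw [← hbin]
    refine Finset.sum_le_sum_of_subset_of_nonneg (Finset.filter_subset _ _) ?_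
    intro A _ _
    positivity
  have hkM : k / M ≤ 1 := by rw [div_le_one hM0]; linarith
  have hkM0 : 0 ≤ k / M := by positivity
  have step3 : (pp * Real.exp (-t) + (1-pp))^mm ≤ Real.exp (-(M - k)) := by
    rw [hent]
    have hbase0 : 0 ≤ pp * (k/M) + (1-pp) := by positivity
    have hbase : pp * (k/M) + (1-pp) ≤ Real.exp (-(pp * (1 - k/M))) := by
      have := Real.add_one_le_exp (-(pp * (1 - k/M)))
      linarith
    calc (pp * (k/M) + (1-pp))^mm ≤ (Real.exp (-(pp * (1 - k/M))))^mm :=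
          pow_le_pow_left₀ hbase0 hbase mm
      _ = Real.exp ((mm:ℕ) * (-(pp * (1 - k/M)))) := (Real.exp_nat_mul _ mm).symm
      _ = Real.exp (-(M - k)) := by
          congr 1
          have hMM : (mm:ℝ) * pp = M := hMdef.symm
          have : (mm:ℝ) * (pp * (k/M)) = M * (k/M) := by rw [← mul_assoc, hMM]
          have h2 : M * (k/M) = k := by field_simp
          push_cast
          nlinarith [this, h2]
  have total : ∑ A ∈ Finset.univ.powerset.filter (fun A : Finset (Fin mm) => A.card ≤ b),
      pp^A.card * (1-pp)^(mm - A.card) ≤ Real.exp (t*b) * Real.exp (-(M - k)) := by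
    calc _ ≤ ∑ A ∈ Finset.univ.powerset.filter (fun A : Finset (Fin mm) => A.card ≤ b),
        Real.exp (t*b) * ((pp * Real.exp (-t))^A.card * (1-pp)^(mm - A.card)) :=
          Finset.sum_le_sum step1
      _ = Real.exp (t*b) * ∑ A ∈ Finset.univ.powerset.filter (fun A : Finset (Fin mm) => A.card ≤ b),
        (pp * Real.exp (-t))^A.card * (1-pp)^(mm - A.card) := by rw [Finset.mul_sum]
      _ ≤ Real.exp (t*b) * (pp * Real.exp (-t) + (1-pp))^mm :=
          mul_le_mul_of_nonneg_left step2 (Real.exp_nonneg _)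
      _ ≤ _ := mul_le_mul_of_nonneg_left step3 (Real.exp_nonneg _)
  rw [← Real.exp_add] at total
  refine total.trans (Real.exp_le_exp.2 ?_)
  -- final exponent inequality: t*b + -(M - k) ≤ -L
  set sk := Real.sqrt k with hskdef
  set sM := Real.sqrt M with hsMdef
  set sL := Real.sqrt L with hsLdef
  have hsk2 : sk^2 = k := Real.sq_sqrt hk0.le
  have hsM2 : sM^2 = M := Real.sq_sqrt hM0.le
  have hsL2 : sL^2 = L := Real.sq_sqrt hL'
  have hsk0 : 0 < sk := Real.sqrt_pos.2 hk0
  have hsM0 : 0 < sM := Real.sqrt_pos.2 hM0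
  have hsL0 : 0 ≤ sL := Real.sqrt_nonneg _
  have htb : t * b ≤ t * k := by
    have : (b:ℝ) ≤ k := by rw [hkdef]; linarith
    nlinarith
  have hlog : t ≤ 2 * (Real.sqrt (M/k) - 1) := by
    have h1 : t = 2 * Real.log (Real.sqrt (M/k)) := by
      rw [htdef, Real.log_sqrt (by positivity)]; ring
    have h2 : Real.log (Real.sqrt (M/k)) ≤ Real.sqrt (M/k) - 1 :=
      Real.log_le_sub_one_of_pos (Real.sqrt_pos.2 (by positivity))
    linarith
  have hsdiv : Real.sqrt (M/k) = sM / sk := by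
    rw [hsMdef, hskdef, ← Real.sqrt_div hM0.le]
  have htk : t * k ≤ 2 * sk * sM - 2 * k := by
    have h3 : t * k ≤ (2 * (sM/sk - 1)) * k := by
      have h3' := mul_le_mul_of_nonneg_right hlog hk0.le
      rwa [hsdiv] at h3'
    have h4 : (2 * (sM/sk - 1)) * k = 2 * sk * sM - 2 * k := by
      rw [← hsk2]; field_simp
    exact h3.trans h4.le
  have hsum : sk + sL ≤ sM := by
    have h5 : (sk + sL)^2 ≤ sM^2 := by nlinarith [sq_nonneg (sk - sL)]
    nlinarith [sq_nonneg (sk + sL - sM), sq_nonneg (sk + sL + sM)]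
  have hfin : L ≤ (sM - sk)^2 := by nlinarith
  have hexp : (sM - sk)^2 = M - 2*sM*sk + k := by linear_combination hsM2 + hsk2
  linarith [htb, htk, hfin, hexp]

lemma interval_bad_bound (m b : ℕ) (D : Measure ℝ) [IsProbabilityMeasure D]
    (S : Set ℝ) [DecidablePred (· ∈ S)] (hS : MeasurableSet S) (p : ℝ) (hp0 : 0 < p) (hp1 : p ≤ 1)
    (hDS : D S = ENNReal.ofReal p) (L : ℝ) (hL : 0 < L)
    (hM : 2*((b:ℝ)+1) + 8*L ≤ m*p) :
    (Measure.pi fun _ : Fin m => D)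
      {ω : Fin m → ℝ | (Finset.univ.filter fun i : Fin m => ω i ∈ S).card ≤ b}
      ≤ ENNReal.ofReal (Real.exp (-L)) := by
  classical
  set μ := Measure.pi fun _ : Fin m => D with hμ
  set 𝒜 := Finset.univ.powerset.filter (fun A : Finset (Fin m) => A.card ≤ b) with h𝒜
  have hsub : {ω : Fin m → ℝ | (Finset.univ.filter fun i : Fin m => ω i ∈ S).card ≤ b}
      ⊆ ⋃ A ∈ 𝒜, Set.pi Set.univ (fun i => if i ∈ A then S else Sᶜ) := by
    intro ω hω
    simp only [Set.mem_setOf_eq] at hω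
    refine Set.mem_iUnion₂.2 ⟨Finset.univ.filter (fun i => ω i ∈ S), ?_, ?_⟩
    · simp only [h𝒜, mem_filter, mem_powerset]
      exact ⟨Finset.subset_univ _, hω⟩
    · intro i _
      by_cases hi : ω i ∈ S
      · simp [hi]
      · simp [hi]
  have hcyl : ∀ A : Finset (Fin m), A ∈ 𝒜 →
      μ (Set.pi Set.univ (fun i => if i ∈ A then S else Sᶜ))
        = ENNReal.ofReal (p ^ A.card * (1-p) ^ (m - A.card)) := by
    intro A _
    rw [hμ, Measure.pi_pi]
    have hDc : D Sᶜ = ENNReal.ofReal (1 - p) := by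
      rw [prob_compl_eq_one_sub hS, hDS, ← ENNReal.ofReal_one,
        ← ENNReal.ofReal_sub _ hp0.le]
    have : ∀ i : Fin m, D (if i ∈ A then S else Sᶜ)
        = if i ∈ A then ENNReal.ofReal p else ENNReal.ofReal (1-p) := by
      intro i; by_cases hi : i ∈ A <;> simp [hi, hDS, hDc]
    rw [Finset.prod_congr rfl (fun i _ => this i), Finset.prod_ite,
      Finset.prod_const, Finset.prod_const]
    have h1 : (Finset.univ.filter fun i : Fin m => i ∈ A) = A := by
      ext i; simp
    have h2 : (Finset.univ.filter fun i : Fin m => ¬ i ∈ A).card = m - A.card := by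
      rw [Finset.filter_not, h1, Finset.card_sdiff_of_subset (Finset.subset_univ A),
        Finset.card_univ, Fintype.card_fin]
    rw [h1, h2, ← ENNReal.ofReal_pow hp0.le, ← ENNReal.ofReal_pow (by linarith : (0:ℝ) ≤ 1-p),
      ← ENNReal.ofReal_mul (by positivity)]
  calc μ _ ≤ μ (⋃ A ∈ 𝒜, Set.pi Set.univ (fun i => if i ∈ A then S else Sᶜ)) :=
        measure_mono hsub
    _ ≤ ∑ A ∈ 𝒜, μ (Set.pi Set.univ (fun i => if i ∈ A then S else Sᶜ)) :=
        measure_biUnion_finset_le _ _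
    _ = ∑ A ∈ 𝒜, ENNReal.ofReal (p ^ A.card * (1-p) ^ (m - A.card)) :=
        Finset.sum_congr rfl hcyl
    _ = ENNReal.ofReal (∑ A ∈ 𝒜, p ^ A.card * (1-p) ^ (m - A.card)) := by
        rw [ENNReal.ofReal_sum_of_nonneg (fun A _ => mul_nonneg (pow_nonneg hp0.le _) (pow_nonneg (by linarith) _))]
    _ ≤ ENNReal.ofReal (Real.exp (-L)) := by
        apply ENNReal.ofReal_le_ofReal
        exact chernoff_sum m b p L hp0 hp1 hL hM

end Aux

theorem stmt5 (c b m : ℕ) (hc : 1 ≤ c) (ε δ : ℝ)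
    (hε : ε ∈ Set.Ioo (0 : ℝ) 1) (hδ : δ ∈ Set.Ioo (0 : ℝ) 1)
    (a : Fin c → ℝ) (ha : StrictMono a) (s : ℤ) (hs : s = -1 ∨ s = 1)
    (l r : Fin c → ℝ) (hl : ∀ j, l j < a j) (hr : ∀ j, a j < r j)
    (hsep : ∀ j k : Fin c, j < k → r j ≤ l k)
    (D : Measure ℝ) [IsProbabilityMeasure D]
    (hDl : ∀ j, D (Set.Ico (l j) (a j)) = ENNReal.ofReal (ε / (2 * c)))
    (hDr : ∀ j, D (Set.Ico (a j) (r j)) = ENNReal.ofReal (ε / (2 * c)))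
    (hm : 2 * c * (2 * (b + 1) + 8 * Real.log (2 * c / δ)) / ε ≤ (m : ℝ)) :
    1 - ENNReal.ofReal δ ≤
      (Measure.pi fun _ : Fin m => D)
        {ω : Fin m → ℝ | 1 - ENNReal.ofReal ε ≤
          D {x : ℝ | ∀ h : ℝ → ℤ, (∀ t, h t = -1 ∨ h t = 1) →
              alternations h ≤ (c : ℕ∞) →
              (Finset.univ.filter fun i : Fin m => h (ω i) ≠ stepFun a s (ω i)).card ≤ b →
              h x = stepFun a s x}} := by
  classical
  obtain ⟨hε0, hε1⟩ := hε
  obtain ⟨hδ0, hδ1⟩ := hδ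
  have hc0 : (0:ℝ) < c := by exact_mod_cast hc
  set μ := Measure.pi fun _ : Fin m => D with hμ
  set E : Set (Fin m → ℝ) := {ω : Fin m → ℝ | 1 - ENNReal.ofReal ε ≤
      D {x : ℝ | ∀ h : ℝ → ℤ, (∀ t, h t = -1 ∨ h t = 1) →
          alternations h ≤ (c : ℕ∞) →
          (Finset.univ.filter fun i : Fin m => h (ω i) ≠ stepFun a s (ω i)).card ≤ b →
          h x = stepFun a s x}} with hE
  set L : ℝ := Real.log (2 * c / δ) with hLdef
  have hc1 : (1:ℝ) ≤ c := by exact_mod_cast hc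
  have h2cδ : (1:ℝ) < 2 * c / δ := by
    rw [lt_div_iff₀ hδ0]; linarith
  have hL : 0 < L := Real.log_pos h2cδ
  set p : ℝ := ε / (2 * c) with hpdef
  have hp0 : 0 < p := by positivity
  have hp1 : p ≤ 1 := by
    rw [hpdef, div_le_one (by positivity)]; linarith
  have hMm : 2*((b:ℝ)+1) + 8*L ≤ m*p := by
    have h1 : (2 * c * (2 * (b + 1) + 8 * L) / ε) * p ≤ (m:ℝ) * p :=
      mul_le_mul_of_nonneg_right hm hp0.le
    calc 2*((b:ℝ)+1) + 8*L = (2 * c * (2 * (b + 1) + 8 * L) / ε) * p := by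
          rw [hpdef]; field_simp
      _ ≤ (m:ℝ) * p := h1
  have hexpL : Real.exp (-L) = δ / (2*c) := by
    rw [hLdef, ← Real.log_inv, Real.exp_log (by positivity)]
    rw [inv_div]
  -- the good event
  set G : Set (Fin m → ℝ) := {ω | ∀ j : Fin c,
      b + 1 ≤ (Finset.univ.filter fun i : Fin m => ω i ∈ Set.Ico (l j) (a j)).card ∧
      b + 1 ≤ (Finset.univ.filter fun i : Fin m => ω i ∈ Set.Ico (a j) (r j)).card} with hG
  -- complement bound
  have hGc : μ Gᶜ ≤ ENNReal.ofReal δ := by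
    have hsub : Gᶜ ⊆ ⋃ j : Fin c,
        ({ω : Fin m → ℝ | (Finset.univ.filter fun i : Fin m => ω i ∈ Set.Ico (l j) (a j)).card ≤ b} ∪
         {ω : Fin m → ℝ | (Finset.univ.filter fun i : Fin m => ω i ∈ Set.Ico (a j) (r j)).card ≤ b}) := by
      intro ω hω
      simp only [hG, Set.mem_compl_iff, Set.mem_setOf_eq, not_forall] at hω
      obtain ⟨j, hj⟩ := hω
      refine Set.mem_iUnion.2 ⟨j, ?_⟩
      rcases not_and_or.1 hj with h' | h'
      · exact Or.inl (by simpa using Nat.lt_succ_iff.1 (Nat.lt_of_not_le h')) 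
      · exact Or.inr (by simpa using Nat.lt_succ_iff.1 (Nat.lt_of_not_le h'))
    have hbound : ∀ j : Fin c,
        μ {ω : Fin m → ℝ | (Finset.univ.filter fun i : Fin m => ω i ∈ Set.Ico (l j) (a j)).card ≤ b}
          ≤ ENNReal.ofReal (δ / (2*c)) ∧
        μ {ω : Fin m → ℝ | (Finset.univ.filter fun i : Fin m => ω i ∈ Set.Ico (a j) (r j)).card ≤ b}
          ≤ ENNReal.ofReal (δ / (2*c)) := by
      intro j
      constructor
      · rw [← hexpL]
        exact interval_bad_bound m b D _ measurableSet_Ico p hp0 hp1 (hDl j) L hL hMm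
      · rw [← hexpL]
        exact interval_bad_bound m b D _ measurableSet_Ico p hp0 hp1 (hDr j) L hL hMm
    calc μ Gᶜ ≤ ∑ j : Fin c, μ ({ω : Fin m → ℝ | (Finset.univ.filter fun i : Fin m => ω i ∈ Set.Ico (l j) (a j)).card ≤ b} ∪ {ω : Fin m → ℝ | (Finset.univ.filter fun i : Fin m => ω i ∈ Set.Ico (a j) (r j)).card ≤ b}) :=
          (measure_mono hsub).trans (measure_iUnion_fintype_le _ _)
      _ ≤ ∑ _j : Fin c, (ENNReal.ofReal (δ / (2*c)) + ENNReal.ofReal (δ / (2*c))) := by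
          refine Finset.sum_le_sum fun j _ => ?_
          exact (measure_union_le _ _).trans (add_le_add (hbound j).1 (hbound j).2)
      _ = ENNReal.ofReal δ := by
          rw [Finset.sum_const, Finset.card_univ, Fintype.card_fin,
            ← ENNReal.ofReal_add (by positivity) (by positivity)]
          rw [nsmul_eq_mul, ← ENNReal.ofReal_natCast c, ← ENNReal.ofReal_mul (by positivity)]
          congr 1
          field_simp
          ring
  -- G is contained in the target event
  have hGsub : G ⊆ E := by
    intro ω hω
    simp only [hE, hG, Set.mem_setOf_eq] at hω ⊢
    set Good := {x : ℝ | ∀ h : ℝ → ℤ, (∀ t, h t = -1 ∨ h t = 1) →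
          alternations h ≤ (c : ℕ∞) →
          (Finset.univ.filter fun i : Fin m => h (ω i) ≠ stepFun a s (ω i)).card ≤ b →
          h x = stepFun a s x} with hGood
    set U := ⋃ j : Fin c, Set.Ico (l j) (r j) with hU
    have hUGood : Uᶜ ⊆ Good := by
      intro x hx
      simp only [hU, Set.mem_compl_iff, Set.mem_iUnion, not_exists, Set.mem_Ico] at hx
      intro h hsgn halt hmis
      -- extract agreeing points in each interval
      have hext : ∀ (T : Set ℝ),
          b + 1 ≤ (Finset.univ.filter fun i : Fin m => ω i ∈ T).card →
          ∃ y, y ∈ T ∧ h y = stepFun a s y := by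
        intro T hT
        set AA := Finset.univ.filter fun i : Fin m => ω i ∈ T with hAA
        set MM := Finset.univ.filter fun i : Fin m => h (ω i) ≠ stepFun a s (ω i) with hMM
        have hMMb : MM.card ≤ b := hmis
        have hcard : 1 ≤ (AA \ MM).card := by
          have := Finset.le_card_sdiff MM AA
          omega
        obtain ⟨i, hi⟩ := Finset.card_pos.1 hcard
        simp only [hAA, hMM, Finset.mem_sdiff, Finset.mem_filter, Finset.mem_univ, true_and,
          not_not] at hi
        exact ⟨ω i, hi.1, hi.2⟩
      have hpl : ∀ j : Fin c, ∃ y, y ∈ Set.Ico (l j) (a j) ∧ h y = stepFun a s y :=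
        fun j => hext (Set.Ico (l j) (a j)) (by convert (hω j).1 using 3)
      have hql : ∀ j : Fin c, ∃ y, y ∈ Set.Ico (a j) (r j) ∧ h y = stepFun a s y :=
        fun j => hext (Set.Ico (a j) (r j)) (by convert (hω j).2 using 3)
      choose pf hpf1 hpf2 using hpl
      choose qf hqf1 hqf2 using hql
      have hstep_p : ∀ j : Fin c, stepFun a s (pf j) = s * (-1)^(j:ℕ) := by
        intro j
        refine stepFun_val a s _ (j:ℕ) (le_of_lt j.isLt) (fun k => ⟨?_, ?_⟩)
        · intro hk
          by_contra hkj
          have h1 : a j ≤ a k := ha.monotone (by rw [Fin.le_def]; omega)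
          have h2 : pf j < a j := (hpf1 j).2
          have h3 : a k ≤ pf j := hk
          linarith
        · intro hk
          have hkj : k < j := by rw [Fin.lt_def]; omega
          calc a k ≤ r k := (hr k).le
            _ ≤ l j := hsep k j hkj
            _ ≤ pf j := (hpf1 j).1
      have hstep_q : ∀ j : Fin c, stepFun a s (qf j) = s * (-1)^((j:ℕ)+1) := by
        intro j
        refine stepFun_val a s _ ((j:ℕ)+1) j.isLt (fun k => ⟨?_, ?_⟩)
        · intro hk
          by_contra hkj
          have hjk : j < k := by rw [Fin.lt_def]; omega
          have h1 : qf j < r j := (hqf1 j).2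
          have h2 : r j ≤ l k := hsep j k hjk
          have h3 : l k < a k := hl k
          have h4 : a k ≤ qf j := hk
          linarith
        · intro hk
          have hkj : k ≤ j := by rw [Fin.le_def]; omega
          calc a k ≤ a j := ha.monotone hkj
            _ ≤ qf j := (hqf1 j).1
      exact key hc a l r pf qf ha hl hr hsep (fun j => (hpf1 j).1) (fun j => (hpf1 j).2)
        (fun j => (hqf1 j).1) (fun j => (hqf1 j).2) s hs h
        (fun j => (hpf2 j).trans (hstep_p j)) (fun j => (hqf2 j).trans (hstep_q j))
        halt x (fun j => by
          by_cases hxj : x < l j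
          · exact Or.inl hxj
          · exact Or.inr (le_of_not_gt fun hcon => (hx j) ⟨le_of_not_gt hxj, hcon⟩))
    -- measure bound
    have hDU : D U ≤ ENNReal.ofReal ε := by
      calc D U ≤ ∑ j : Fin c, D (Set.Ico (l j) (r j)) := measure_iUnion_fintype_le _ _
        _ ≤ ∑ j : Fin c, (ENNReal.ofReal (ε / (2*c)) + ENNReal.ofReal (ε / (2*c))) := by
            refine Finset.sum_le_sum fun j _ => ?_
            have hsplit : Set.Ico (l j) (r j) ⊆ Set.Ico (l j) (a j) ∪ Set.Ico (a j) (r j) := by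
              rw [Set.Ico_union_Ico_eq_Ico (hl j).le (hr j).le]
            calc D (Set.Ico (l j) (r j)) ≤ D (Set.Ico (l j) (a j) ∪ Set.Ico (a j) (r j)) :=
                  measure_mono hsplit
              _ ≤ D (Set.Ico (l j) (a j)) + D (Set.Ico (a j) (r j)) := measure_union_le _ _
              _ = _ := by rw [hDl j, hDr j]
        _ = ENNReal.ofReal ε := by
            rw [Finset.sum_const, Finset.card_univ, Fintype.card_fin,
              ← ENNReal.ofReal_add (by positivity) (by positivity),
              nsmul_eq_mul, ← ENNReal.ofReal_natCast c, ← ENNReal.ofReal_mul (by positivity)]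
            congr 1
            field_simp
            ring
    rw [tsub_le_iff_right]
    calc (1:ℝ≥0∞) = D Set.univ := (measure_univ).symm
      _ ≤ D (Good ∪ U) := measure_mono (fun x _ => by
          by_cases hx : x ∈ U
          · exact Or.inr hx
          · exact Or.inl (hUGood hx))
      _ ≤ D Good + D U := measure_union_le _ _
      _ ≤ D Good + ENNReal.ofReal ε := add_le_add_right hDU _
  -- conclude
  rw [tsub_le_iff_right]
  calc (1:ℝ≥0∞) = μ Set.univ := (measure_univ).symm
    _ ≤ μ (E ∪ Gᶜ) := measure_mono (fun ω _ => by
        by_cases hω : ω ∈ G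
        · exact Or.inl (hGsub hω)
        · exact Or.inr hω)
    _ ≤ μ E + μ Gᶜ := measure_union_le _ _
    _ ≤ μ E + ENNReal.ofReal δ := add_le_add_right hGc _
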